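/- Let N ≥ 1, set n := 2N+2, let T be an n×n complex matrix satisfying T·conj(T) = −I (conj denotes entrywise complex conjugation), let X₂ be an n×(N+2) complex matrix and X₀ an n×N complex matrix. Define g := det of the n×n matrix whose first N+2 columns are those of X₂ and whose last N columns are those of T·conj(X₀), and define h := −det of the n×n matrix whose first N columns are those of X₀ and whose last N+2 columns are those of T·conj(X₂). Then det(T)·conj(g) = −h; in particular conj(g) = −det(T)⁻¹·h. -/

import Mathlib

open Matrix
open Fin.CommRing

lemma finRotate_pow_apply (m k : ℕ) :
    ∀ j : Fin (m + 1), ((finRotate (m + 1)) ^ k) j = j + (k : Fin (m + 1)) := by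
  induction k with
  | zero => simp
  | succ k ih =>
    intro j
    rw [pow_succ, Equiv.Perm.mul_apply, finRotate_succ_apply, ih]
    push_cast
    ring

theorem casoratian_conj_g_h (N : ℕ) (hN : 1 ≤ N)
    (T : Matrix (Fin (2 * N + 2)) (Fin (2 * N + 2)) ℂ)
    (hT : T * T.map (starRingEnd ℂ) = -1)
    (X₂ : Matrix (Fin (2 * N + 2)) (Fin (N + 2)) ℂ)
    (X₀ : Matrix (Fin (2 * N + 2)) (Fin N) ℂ)
    (g h : ℂ)
    (hg : g = Matrix.det (Matrix.of fun i j : Fin (2 * N + 2) =>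
      if hj : (j : ℕ) < N + 2 then X₂ i ⟨(j : ℕ), hj⟩
      else (T * X₀.map (starRingEnd ℂ)) i
        ⟨(j : ℕ) - (N + 2), by have := j.isLt; omega⟩))
    (hh : h = -Matrix.det (Matrix.of fun i j : Fin (2 * N + 2) =>
      if hj : (j : ℕ) < N then X₀ i ⟨(j : ℕ), hj⟩
      else (T * X₂.map (starRingEnd ℂ)) i
        ⟨(j : ℕ) - N, by have := j.isLt; omega⟩)) :
    T.det * starRingEnd ℂ g = -h ∧ starRingEnd ℂ g = -T.det⁻¹ * h := by
  classical
  set M : Matrix (Fin (2 * N + 2)) (Fin (2 * N + 2)) ℂ :=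
    Matrix.of fun i j : Fin (2 * N + 2) =>
      if hj : (j : ℕ) < N + 2 then X₂ i ⟨(j : ℕ), hj⟩
      else (T * X₀.map (starRingEnd ℂ)) i
        ⟨(j : ℕ) - (N + 2), by have := j.isLt; omega⟩ with hM
  set B : Matrix (Fin (2 * N + 2)) (Fin (2 * N + 2)) ℂ :=
    Matrix.of fun i j : Fin (2 * N + 2) =>
      if hj : (j : ℕ) < N then X₀ i ⟨(j : ℕ), hj⟩
      else (T * X₂.map (starRingEnd ℂ)) i
        ⟨(j : ℕ) - N, by have := j.isLt; omega⟩ with hB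
  set σ : Equiv.Perm (Fin (2 * N + 2)) := (finRotate (2 * N + 2)) ^ N with hσ
  have hNval : ((N : Fin (2 * N + 2)) : ℕ) = N := Fin.val_cast_of_lt (by omega)
  have hσval : ∀ j : Fin (2 * N + 2), ((σ j : Fin (2 * N + 2)) : ℕ)
      = ((j : ℕ) + N) % (2 * N + 2) := by
    intro j
    have := finRotate_pow_apply (2 * N + 1) N j
    rw [hσ]
    show (((finRotate (2 * N + 1 + 1)) ^ N) j : ℕ) = _
    rw [this, Fin.add_def, hNval]
  set v : Fin (2 * N + 2) → ℂ := fun j => if (j : ℕ) < N + 2 then 1 else -1 with hv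
  have key : T * M.map (starRingEnd ℂ) =
      Matrix.of (fun i j => v j * (B.submatrix id σ) i j) := by
    have hMc : M.map (starRingEnd ℂ) =
        Matrix.of fun i j : Fin (2 * N + 2) =>
          if hj : (j : ℕ) < N + 2 then starRingEnd ℂ (X₂ i ⟨(j : ℕ), hj⟩)
          else (T.map (starRingEnd ℂ) * X₀) i
            ⟨(j : ℕ) - (N + 2), by have := j.isLt; omega⟩ := by
      ext i j
      by_cases hj : (j : ℕ) < N + 2
      · simp [hM, hj, Matrix.map_apply]
      · simp only [Matrix.map_apply, hM, Matrix.of_apply, dif_neg hj]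
        rw [Matrix.mul_apply, Matrix.mul_apply, map_sum]
        refine Finset.sum_congr rfl fun k _ => ?_
        simp [Matrix.map_apply, _root_.map_mul]
    ext i j
    by_cases hj : (j : ℕ) < N + 2
    · have hσj : ((σ j : Fin (2 * N + 2)) : ℕ) = (j : ℕ) + N := by
        rw [hσval j, Nat.mod_eq_of_lt (by omega)]
      have hσjN : ¬ ((σ j : Fin (2 * N + 2)) : ℕ) < N := by omega
      simp only [Matrix.of_apply, hv, if_pos hj, one_mul, Matrix.submatrix_apply, id_eq,
        hB, dif_neg hσjN]
      rw [hMc, Matrix.mul_apply, Matrix.mul_apply]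
      refine Finset.sum_congr rfl fun k _ => ?_
      have hidx : (⟨(j : ℕ), hj⟩ : Fin (N + 2))
          = ⟨((σ j : Fin (2 * N + 2)) : ℕ) - N, by omega⟩ := Fin.ext (by simp; omega)
      simp only [Matrix.of_apply, dif_pos hj, Matrix.map_apply, hidx]
    · have hσj : ((σ j : Fin (2 * N + 2)) : ℕ) = (j : ℕ) - (N + 2) := by
        have hj2 := j.isLt
        rw [hσval j, show (j : ℕ) + N = (2 * N + 2) + ((j : ℕ) - (N + 2)) from by omega,
          Nat.add_mod_left, Nat.mod_eq_of_lt (by omega)]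
      have hσjN : ((σ j : Fin (2 * N + 2)) : ℕ) < N := by
        have := j.isLt; omega
      have lhs_eq : (T * M.map (starRingEnd ℂ)) i j
          = (T * (T.map (starRingEnd ℂ) * X₀)) i
              ⟨(j : ℕ) - (N + 2), by have := j.isLt; omega⟩ := by
        rw [Matrix.mul_apply, Matrix.mul_apply]
        refine Finset.sum_congr rfl fun k _ => ?_
        rw [hMc]
        simp only [Matrix.of_apply, dif_neg hj]
      rw [lhs_eq, ← Matrix.mul_assoc, hT]
      have hidx : (⟨((σ j : Fin (2 * N + 2)) : ℕ), hσjN⟩ : Fin N)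
          = ⟨(j : ℕ) - (N + 2), by have := j.isLt; omega⟩ := Fin.ext (by simp; omega)
      simp only [Matrix.of_apply, hv, if_neg hj, Matrix.submatrix_apply, id_eq, hB,
        dif_pos hσjN, hidx, neg_mul, one_mul, Matrix.neg_mul, Matrix.one_mul, Matrix.neg_apply]
  -- determinants
  have hdetsign : (Equiv.Perm.sign σ : ℤ) = (-1 : ℤ) ^ N := by
    rw [hσ, map_pow]
    show ((Equiv.Perm.sign (finRotate (2 * N + 1 + 1)) ^ N : ℤˣ) : ℤ) = _
    rw [sign_finRotate]
    push_cast
    rw [← pow_mul]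
    rw [show (2 * N + 1) * N = 2 * (N * N) + N by ring, pow_add, pow_mul]
    simp
  have hprod : (∏ j : Fin (2 * N + 2), (fun j : Fin (2 * N + 2) =>
      if (j : ℕ) < N + 2 then (1 : ℂ) else -1) j) = (-1 : ℂ) ^ N := by
    rw [Fin.prod_univ_eq_prod_range (fun j => if j < N + 2 then (1 : ℂ) else -1)]
    rw [show 2 * N + 2 = (N + 2) + N by ring, Finset.prod_range_add]
    rw [Finset.prod_congr rfl (fun i hi => if_pos (Finset.mem_range.mp hi)),
      Finset.prod_congr rfl (fun i hi => if_neg (by omega))]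
    simp
  have hdet : T.det * starRingEnd ℂ g = -h := by
    have h1 : starRingEnd ℂ g = (M.map (starRingEnd ℂ)).det := by
      rw [hg]
      exact RingHom.map_det (starRingEnd ℂ) M
    rw [h1, ← Matrix.det_mul, key]
    rw [Matrix.det_mul_row, Matrix.det_permute', hv, hprod, hh, neg_neg]
    rw [show ((Equiv.Perm.sign σ : ℤ) : ℂ) = ((-1 : ℤ) ^ N : ℤ) from by rw [hdetsign]]
    push_cast
    rw [← mul_assoc, ← pow_add, ← two_mul, pow_mul]
    norm_num
  refine ⟨hdet, ?_⟩
  have hdetT : T.det ≠ 0 := by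
    intro h0
    have := congrArg Matrix.det hT
    rw [Matrix.det_mul, h0, zero_mul] at this
    have h2 : ((-1 : Matrix (Fin (2 * N + 2)) (Fin (2 * N + 2)) ℂ)).det
        = (-1 : ℂ) ^ (2 * N + 2) := by
      rw [show (-1 : Matrix (Fin (2 * N + 2)) (Fin (2 * N + 2)) ℂ) = -(1 : Matrix _ _ ℂ) from rfl,
        Matrix.det_neg, Matrix.det_one, Fintype.card_fin, mul_one]
    rw [h2] at this
    have : ((-1 : ℂ) ^ (2 * N + 2)) = 0 := this.symm
    simp [pow_mul] at this
  field_simp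
  linear_combination hdet
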